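/- Let r > 0 and let f : [r, ∞) → ℝ be continuously differentiable such that L := lim_{s→∞} s²·f(s)² exists and ∫_r^∞ s³(f'(s))² ds < ∞. Then r²·f(r)² + ∫_r^∞ s·f(s)² ds ≤ L + ∫_r^∞ s³(f'(s))² ds. -/

import Mathlib

open MeasureTheory Set Filter

/-- Weighted Hardy inequality near infinity:
`r² f(r)² + ∫_r^∞ s f² ≤ lim_{s→∞} s² f(s)² + ∫_r^∞ s³ f'(s)²`. -/
theorem stmt_2 (r L : ℝ) (hr : 0 < r) (f f' : ℝ → ℝ)
    (hderiv : ∀ s ∈ Ici r, HasDerivWithinAt f (f' s) (Ici r) s)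
    (hcont : ContinuousOn f' (Ici r))
    (hL : Tendsto (fun s => s ^ 2 * f s ^ 2) atTop (nhds L))
    (hint : IntegrableOn (fun s => s ^ 3 * f' s ^ 2) (Ici r)) :
    ENNReal.ofReal (r ^ 2 * f r ^ 2) + ∫⁻ s in Ici r, ENNReal.ofReal (s * f s ^ 2) ≤
      ENNReal.ofReal (L + ∫ s in Ici r, s ^ 3 * f' s ^ 2) := by
  set C : ℝ := ∫ s in Ici r, s ^ 3 * f' s ^ 2 with hC
  set h : ℝ → ℝ := fun s => s * f s ^ 2 with hh
  set g : ℝ → ℝ := fun s => s ^ 2 * f s ^ 2 with hg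
  have hfc : ContinuousOn f (Ici r) := fun s hs => (hderiv s hs).continuousWithinAt
  have hhc : ContinuousOn h (Ici r) := continuousOn_id.mul (hfc.pow 2)
  -- interval integrability facts
  have hIcc : ∀ R : ℝ, r ≤ R → Icc r R ⊆ Ici r := fun R hR => Icc_subset_Ici_self
  have hhint : ∀ R : ℝ, r ≤ R → IntervalIntegrable h volume r R := by
    intro R hR
    exact (hhc.mono (by rw [uIcc_of_le hR]; exact Icc_subset_Ici_self)).intervalIntegrable
  have hwint : ∀ R : ℝ, r ≤ R → IntervalIntegrable (fun s => s ^ 3 * f' s ^ 2) volume r R := by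
    intro R hR
    rw [intervalIntegrable_iff_integrableOn_Ioc_of_le hR]
    exact hint.mono_set (fun x hx => le_of_lt hx.1)
  -- the inner integral of s³ f'² is at most C
  have hC0 : 0 ≤ C := by
    apply setIntegral_nonneg measurableSet_Ici
    intro x hx
    have hx0 : (0:ℝ) ≤ x := hr.le.trans hx
    positivity
  have hwle : ∀ R : ℝ, r ≤ R → (∫ s in r..R, s ^ 3 * f' s ^ 2) ≤ C := by
    intro R hR
    rw [intervalIntegral.integral_of_le hR]
    apply setIntegral_mono_set hint
    · filter_upwards [ae_restrict_mem measurableSet_Ici] with x hx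
      have hx0 : (0:ℝ) ≤ x := hr.le.trans hx
      positivity
    · exact (HasSubset.Subset.eventuallyLE (fun x hx => le_of_lt hx.1))
  -- fundamental theorem of calculus for g on [r, R]
  have hFTC : ∀ R : ℝ, r ≤ R →
      (∫ s in r..R, (2 * s * f s ^ 2 + 2 * s ^ 2 * f s * f' s)) = g R - g r := by
    intro R hR
    apply intervalIntegral.integral_eq_sub_of_hasDeriv_right_of_le hR
    · exact ((continuous_pow 2).continuousOn.mul
        ((hfc.mono (hIcc R hR)).pow 2))
    · intro x hx
      have hxr : r ≤ x := hx.1.le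
      have hf : HasDerivWithinAt f (f' x) (Ioi x) x :=
        (hderiv x hxr).mono (fun y hy => hxr.trans hy.le)
      have h1 : HasDerivWithinAt (fun s : ℝ => s ^ 2) (2 * x) (Ioi x) x := by
        simpa using (hasDerivAt_pow 2 x).hasDerivWithinAt
      have h2 : HasDerivWithinAt (fun s => f s ^ 2) (2 * f x * f' x) (Ioi x) x := by
        have := hf.fun_pow 2
        simpa [mul_comm, mul_assoc, mul_left_comm] using this
      have := h1.fun_mul h2
      exact this.congr_deriv (by ring)
    · apply ContinuousOn.intervalIntegrable
      rw [uIcc_of_le hR]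
      have hcf : ContinuousOn f (Icc r R) := hfc.mono (hIcc R hR)
      have hcf' : ContinuousOn f' (Icc r R) := hcont.mono (hIcc R hR)
      exact ((continuousOn_const.mul continuousOn_id).mul (hcf.pow 2)).add
        (((continuousOn_const.mul (continuousOn_id.pow 2)).mul hcf).mul hcf')
  -- key inequality on [r, R]
  have key : ∀ R : ℝ, r ≤ R → (∫ s in r..R, h s) ≤ g R - g r + C := by
    intro R hR
    have hmono : (∫ s in r..R, (h s - s ^ 3 * f' s ^ 2)) ≤
        ∫ s in r..R, (2 * s * f s ^ 2 + 2 * s ^ 2 * f s * f' s) := by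
      apply intervalIntegral.integral_mono_on hR ((hhint R hR).sub (hwint R hR))
      · apply ContinuousOn.intervalIntegrable
        rw [uIcc_of_le hR]
        have hcf : ContinuousOn f (Icc r R) := hfc.mono (hIcc R hR)
        have hcf' : ContinuousOn f' (Icc r R) := hcont.mono (hIcc R hR)
        exact ((continuousOn_const.mul continuousOn_id).mul (hcf.pow 2)).add
          (((continuousOn_const.mul (continuousOn_id.pow 2)).mul hcf).mul hcf')
      · intro x hx
        have hx0 : 0 < x := lt_of_lt_of_le hr hx.1
        have hsq : 0 ≤ x * (f x + x * f' x) ^ 2 :=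
          mul_nonneg hx0.le (sq_nonneg _)
        simp only [hh]
        nlinarith [hsq]
    rw [intervalIntegral.integral_sub (hhint R hR) (hwint R hR), hFTC R hR] at hmono
    have := hwle R hR
    linarith
  -- uniform bound independent of R
  have key2 : ∀ R : ℝ, r ≤ R → (∫ s in r..R, h s) ≤ L - g r + C := by
    intro R hR
    have tend : Tendsto (fun R' => g R' - g r + C) atTop (nhds (L - g r + C)) :=
      Tendsto.add_const _ (Tendsto.sub_const hL _)
    apply ge_of_tendsto tend
    filter_upwards [eventually_ge_atTop R] with R' hR'
    have hRR' : r ≤ R' := hR.trans hR'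
    have hmono : (∫ s in r..R, h s) ≤ ∫ s in r..R', h s := by
      apply intervalIntegral.integral_mono_interval le_rfl hR hR'
      · filter_upwards [ae_restrict_mem measurableSet_Ioc] with x hx
        have : 0 < x := lt_of_lt_of_le hr hx.1.le
        simp only [hh, Pi.zero_apply]
        positivity
      · exact hhint R' hRR'
    exact hmono.trans (key R' hRR')
  -- integrability of h on Ioi r
  have hIoi : IntegrableOn h (Ioi r) := by
    apply integrableOn_Ioi_of_intervalIntegral_norm_bounded (L - g r + C) r
      (fun i : ℝ => ?_) (tendsto_id (α := ℝ))
    · filter_upwards [eventually_ge_atTop r] with i hi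
      have : (∫ x in r..i, ‖h x‖) = ∫ x in r..i, h x := by
        apply intervalIntegral.integral_congr
        intro x hx
        rw [uIcc_of_le hi] at hx
        have : 0 < x := lt_of_lt_of_le hr hx.1
        simp only [hh, Real.norm_eq_abs]
        rw [abs_of_nonneg (by positivity)]
      simp only [id_eq]
      rw [this]
      exact key2 i hi
    · rcases le_or_gt r i with hi | hi
      · exact (hhint i hi).1
      · simp [Ioc_eq_empty (not_lt.2 hi.le), integrableOn_empty]
  have hInt : IntegrableOn h (Ici r) := (integrableOn_Ici_iff_integrableOn_Ioi (f := h) (b := r)).2 hIoi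
  -- limit of interval integrals
  have htend : Tendsto (fun i => ∫ x in r..i, h x) atTop (nhds (∫ x in Ioi r, h x)) :=
    intervalIntegral_tendsto_integral_Ioi r hIoi (tendsto_id (α := ℝ))
  have hIle : (∫ x in Ioi r, h x) ≤ L - g r + C := by
    apply le_of_tendsto htend
    filter_upwards [eventually_ge_atTop r] with i hi using key2 i hi
  have hIciIoi : (∫ x in Ici r, h x) = ∫ x in Ioi r, h x :=
    integral_Ici_eq_integral_Ioi
  -- convert lintegral to ofReal of Bochner integral
  have hnn : 0 ≤ᵐ[volume.restrict (Ici r)] h := by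
    filter_upwards [ae_restrict_mem measurableSet_Ici] with x hx
    have : 0 < x := lt_of_lt_of_le hr hx
    simp only [hh, Pi.zero_apply]
    positivity
  have hlin : (∫⁻ s in Ici r, ENNReal.ofReal (s * f s ^ 2)) =
      ENNReal.ofReal (∫ x in Ici r, h x) :=
    (ofReal_integral_eq_lintegral_ofReal hInt hnn).symm
  rw [hlin]
  have hI0 : 0 ≤ ∫ x in Ici r, h x := integral_nonneg_of_ae hnn
  rw [← ENNReal.ofReal_add (by positivity) hI0]
  apply ENNReal.ofReal_le_ofReal
  have hgr : g r = r ^ 2 * f r ^ 2 := rfl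
  rw [hIciIoi]
  linarith [hIle]
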